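/- For x ∈ ℝ^{n+1} with |x| < 1, y ∈ ℝ^{n+1} with |y| = 1, and a unit vector θ with ⟨y,θ⟩ = 0, the inequality (1/|y-x|²)·(⟨x,y⟩ - ⟨x,θ⟩²/|y-x|²) ≥ -1/4 holds. -/
import Mathlib


open scoped RealInnerProductSpace

theorem stmt_6 (n : ℕ) (x y θ : EuclideanSpace ℝ (Fin (n+1)))
    (hx : ‖x‖ < 1) (hy : ‖y‖ = 1) (hθ : ‖θ‖ = 1) (hyθ : ⟪y, θ⟫ = 0) :
    (1 / ‖y - x‖^2) * (⟪x, y⟫ - ⟪x, θ⟫^2 / ‖y - x‖^2) ≥ -1/4 := by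
  have hne : y ≠ x := by
    intro h; rw [h] at hy; linarith
  have hd : (0:ℝ) < ‖y - x‖ := by
    simpa using norm_pos_iff.mpr (sub_ne_zero.mpr hne)
  set a := ⟪x, y⟫ with ha
  set t := ⟪x, θ⟫ with ht
  have hbessel : a^2 + t^2 ≤ ‖x‖^2 := by
    have h0 : (0:ℝ) ≤ ‖x - a • y - t • θ‖^2 := sq_nonneg _
    have hexp : ‖x - a • y - t • θ‖^2 = ‖x‖^2 - a^2 - t^2 := by
      have hyx : ⟪y, x⟫ = a := real_inner_comm x y
      have hθx : ⟪θ, x⟫ = t := real_inner_comm x θ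
      have hθy : ⟪θ, y⟫ = 0 := by rw [real_inner_comm]; exact hyθ
      rw [← real_inner_self_eq_norm_sq]
      simp only [inner_sub_left, inner_sub_right, real_inner_smul_left, real_inner_smul_right,
        real_inner_self_eq_norm_sq, hy, hθ, hyθ, hyx, hθx, hθy, ← ha, ← ht, norm_smul, mul_pow, sq_abs, Real.norm_eq_abs]
      ring
    linarith [hexp ▸ h0]
  have hd2 : ‖y - x‖^2 = 1 - 2*a + ‖x‖^2 := by
    rw [norm_sub_sq_real, hy, real_inner_comm]; ring
  have hdpos : (0:ℝ) < ‖y - x‖^2 := by positivity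
  have h4 : 0 ≤ ‖y - x‖^4 + 4*a*‖y - x‖^2 - 4*t^2 := by
    nlinarith [sq_nonneg (1 - ‖x‖^2)]
  have heq : (1 / ‖y - x‖^2) * (a - t^2/‖y - x‖^2) - (-1/4)
      = (‖y - x‖^4 + 4*a*‖y - x‖^2 - 4*t^2) / (4*‖y - x‖^4) := by
    field_simp
    ring
  have hpos4 : (0:ℝ) < 4*‖y - x‖^4 := by positivity
  have := div_nonneg h4 (le_of_lt hpos4)
  linarith [heq ▸ this]
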